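/- arXiv:2305.09052 — 2 statements merged into one kernel-verified Lean document; each statement's English description precedes it below -/
import Mathlib

section
/- Fix δ ∈ (0, 1/3] sufficiently small, and define the perturbation function φ on ℝ by φ(t) = t+1 on [−1,0], φ(t) = −t+1 on [0,2], φ(t) = t−3 on [2,3], and φ(t) = 0 otherwise. Then f₂(v) = 1 + δ φ((v − 1/2)/δ) is a probability density on [0,1], and for δ < 1/3 it is Myerson regular: its distribution function F₂ satisfies that (1 − F₂(v))^{−1} is convex on [0,1); equivalently, the function ψ = 2 f₂² + (1 − F₂) f₂′ is nonnegative at every point of [0,1) where f₂ is differentiable. -/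
open Set

/-- The perturbation function `φ`: `t+1` on `[-1,0]`, `-t+1` on `[0,2]`, `t-3` on `[2,3]`,
and `0` elsewhere. -/
noncomputable def pert (t : ℝ) : ℝ :=
  if t ∈ Icc (-1 : ℝ) 0 then t + 1
  else if t ∈ Icc (0 : ℝ) 2 then -t + 1
  else if t ∈ Icc (2 : ℝ) 3 then t - 3
  else 0

/-- The perturbed density `f₂(v) = 1 + δ φ((v - 1/2)/δ)`. -/
noncomputable def fTwo (δ : ℝ) (v : ℝ) : ℝ := 1 + δ * pert ((v - 1 / 2) / δ)

/-- The distribution function of `f₂`: `F₂(v) = ∫₀ᵛ f₂`. -/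
noncomputable def FTwo (δ : ℝ) (v : ℝ) : ℝ := ∫ t in (0 : ℝ)..v, fTwo δ t

noncomputable def pcore (u : ℝ) : ℝ := max (min (u + 1) (1 - u)) (u - 3)

lemma pert_eq (t : ℝ) : pert t = pcore (max (-1) (min t 3)) := by
  unfold pert pcore
  rcases lt_or_ge t (-1) with h | h
  · have hc : max (-1 : ℝ) (min t 3) = -1 := by
      rw [min_eq_left (by linarith), max_eq_left (by linarith)]
    rw [hc, if_neg (by simp only [mem_Icc]; intro hh; exact absurd hh.1 (by linarith)),
        if_neg (by simp only [mem_Icc]; intro hh; exact absurd hh.1 (by linarith)),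
        if_neg (by simp only [mem_Icc]; intro hh; exact absurd hh.1 (by linarith))]
    norm_num
  · have hc : max (-1 : ℝ) (min t 3) = min t 3 := max_eq_right (le_min h (by norm_num <;> linarith))
    rcases le_or_gt t 3 with h3 | h3
    · have hc2 : max (-1 : ℝ) (min t 3) = t := by rw [hc, min_eq_left h3]
      rw [hc2]
      rcases le_or_gt t 0 with h0 | h0
      · rw [if_pos (by simp only [mem_Icc]; exact ⟨h, h0⟩),
            min_eq_left (by linarith), max_eq_left (by linarith)]
      rcases le_or_gt t 2 with h2 | h2
      · rw [if_neg (by simp only [mem_Icc]; intro hh; exact absurd hh.2 (by linarith)),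
            if_pos (by simp only [mem_Icc]; exact ⟨h0.le, h2⟩),
            min_eq_right (by linarith), max_eq_left (by linarith)]
        ring
      · rw [if_neg (by simp only [mem_Icc]; intro hh; exact absurd hh.2 (by linarith)),
            if_neg (by simp only [mem_Icc]; intro hh; exact absurd hh.2 (by linarith)),
            if_pos (by simp only [mem_Icc]; exact ⟨h2.le, h3⟩),
            min_eq_right (by linarith), max_eq_right (by linarith)]
    · have hc2 : max (-1 : ℝ) (min t 3) = 3 := by rw [hc, min_eq_right h3.le]
      rw [hc2, if_neg (by simp only [mem_Icc]; intro hh; exact absurd hh.2 (by linarith)),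
          if_neg (by simp only [mem_Icc]; intro hh; exact absurd hh.2 (by linarith)),
          if_neg (by simp only [mem_Icc]; intro hh; exact absurd hh.2 (by linarith))]
      norm_num
lemma lipschitz_of_slope {s c : ℝ} (hs : |s| ≤ 1) :
    LipschitzWith 1 (fun u : ℝ => s * u + c) :=
  LipschitzWith.of_dist_le_mul fun x y => by
    rw [Real.dist_eq, Real.dist_eq,
      show s * x + c - (s * y + c) = s * (x - y) by ring, abs_mul]
    push_cast
    nlinarith [abs_nonneg (x - y), abs_nonneg s]

lemma pert_lipschitz : LipschitzWith 1 pert := by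
  have h1 : LipschitzWith 1 (fun u : ℝ => u + 1) := by
    have e : (fun u : ℝ => u + 1) = fun u : ℝ => 1 * u + 1 := by funext u; ring
    rw [e]; exact lipschitz_of_slope (by norm_num)
  have h2 : LipschitzWith 1 (fun u : ℝ => 1 - u) := by
    have e : (fun u : ℝ => 1 - u) = fun u : ℝ => (-1) * u + 1 := by funext u; ring
    rw [e]; exact lipschitz_of_slope (by norm_num)
  have h3 : LipschitzWith 1 (fun u : ℝ => u - 3) := by
    have e : (fun u : ℝ => u - 3) = fun u : ℝ => 1 * u + (-3) := by funext u; ring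
    rw [e]; exact lipschitz_of_slope (by norm_num)
  have hcore : LipschitzWith 1 pcore := by
    have := (h1.min h2).max h3
    rw [show pcore = fun u => max (min (u + 1) (1 - u)) (u - 3) from rfl]
    simpa using this
  have hclamp : LipschitzWith 1 (fun t : ℝ => max (-1) (min t 3)) := by
    have := ((LipschitzWith.id (α := ℝ)).min_const 3).max_const (-1)
    simpa [max_comm] using this
  have := hcore.comp hclamp
  have e : pert = fun t => pcore (max (-1) (min t 3)) := funext pert_eq
  rw [e]
  simpa [Function.comp_def] using this

lemma pert_cont : Continuous pert := pert_lipschitz.continuous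

lemma pert_bounds (t : ℝ) : -1 ≤ pert t ∧ pert t ≤ 1 := by
  unfold pert
  split_ifs with h1 h2 h3
  · simp only [mem_Icc] at h1; constructor <;> linarith [h1.1, h1.2]
  · simp only [mem_Icc] at h2; constructor <;> linarith [h2.1, h2.2]
  · simp only [mem_Icc] at h3; constructor <;> linarith [h3.1, h3.2]
  · norm_num

lemma pert_zero_left {t : ℝ} (ht : t ≤ -1) : pert t = 0 := by
  unfold pert
  rcases eq_or_lt_of_le ht with rfl | h
  · rw [if_pos (by simp only [mem_Icc]; norm_num)]; norm_num
  · rw [if_neg (by simp only [mem_Icc]; intro hh; exact absurd hh.1 (by linarith)),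
        if_neg (by simp only [mem_Icc]; intro hh; exact absurd hh.1 (by linarith)),
        if_neg (by simp only [mem_Icc]; intro hh; exact absurd hh.1 (by linarith))]

lemma pert_zero_right {t : ℝ} (ht : 3 ≤ t) : pert t = 0 := by
  unfold pert
  rcases eq_or_lt_of_le ht with rfl | h
  · rw [if_neg (by simp only [mem_Icc]; intro hh; exact absurd hh.2 (by norm_num)),
        if_neg (by simp only [mem_Icc]; intro hh; exact absurd hh.2 (by norm_num)),
        if_pos (by simp only [mem_Icc]; norm_num)]
    norm_num
  · rw [if_neg (by simp only [mem_Icc]; intro hh; exact absurd hh.2 (by linarith)),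
        if_neg (by simp only [mem_Icc]; intro hh; exact absurd hh.2 (by linarith)),
        if_neg (by simp only [mem_Icc]; intro hh; exact absurd hh.2 (by linarith))]

lemma pert_on1 {t : ℝ} (h : t ∈ Icc (-1 : ℝ) 0) : pert t = t + 1 := by
  unfold pert; rw [if_pos h]

lemma pert_on2 {t : ℝ} (h : t ∈ Icc (0 : ℝ) 2) : pert t = -t + 1 := by
  unfold pert
  rcases eq_or_lt_of_le h.1 with rfl | h0
  · rw [if_pos (by simp only [mem_Icc]; norm_num)]; norm_num
  · rw [if_neg (by simp only [mem_Icc]; intro hh; exact absurd hh.2 (by linarith)),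
        if_pos h]

lemma pert_on3 {t : ℝ} (h : t ∈ Icc (2 : ℝ) 3) : pert t = t - 3 := by
  unfold pert
  rcases eq_or_lt_of_le h.1 with rfl | h2
  · rw [if_neg (by simp only [mem_Icc]; intro hh; exact absurd hh.2 (by norm_num)),
        if_pos (by simp only [mem_Icc]; norm_num)]
    norm_num
  · rw [if_neg (by simp only [mem_Icc]; intro hh; exact absurd hh.2 (by linarith)),
        if_neg (by simp only [mem_Icc]; intro hh; exact absurd hh.2 (by linarith)),
        if_pos h]

lemma pert_ii (a b : ℝ) : IntervalIntegrable pert MeasureTheory.volume a b :=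
  pert_cont.intervalIntegrable a b

lemma integral_pert {a b : ℝ} (ha : a ≤ -1) (hb : 3 ≤ b) :
    (∫ t in a..b, pert t) = 0 := by
  have i1 : (∫ t in a..(-1 : ℝ), pert t) = 0 := by
    have h : EqOn pert (fun _ => (0 : ℝ)) (uIcc a (-1)) := by
      intro t ht; rw [uIcc_of_le ha] at ht; exact pert_zero_left ht.2
    rw [intervalIntegral.integral_congr h]; simp
  have i2 : (∫ t in (-1 : ℝ)..0, pert t) = 1 / 2 := by
    have h : EqOn pert (fun t => t + 1) (uIcc (-1 : ℝ) 0) := by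
      intro t ht; rw [uIcc_of_le (by norm_num)] at ht; exact pert_on1 ht
    rw [intervalIntegral.integral_congr h,
        intervalIntegral.integral_add intervalIntegral.intervalIntegrable_id intervalIntegrable_const]
    simp
    norm_num
  have i3 : (∫ t in (0 : ℝ)..2, pert t) = 0 := by
    have h : EqOn pert (fun t => 1 - t) (uIcc (0 : ℝ) 2) := by
      intro t ht; rw [uIcc_of_le (by norm_num)] at ht; rw [pert_on2 ht]; ring
    rw [intervalIntegral.integral_congr h,
        intervalIntegral.integral_sub intervalIntegrable_const intervalIntegral.intervalIntegrable_id]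
    simp
    norm_num
  have i4 : (∫ t in (2 : ℝ)..3, pert t) = -(1 / 2) := by
    have h : EqOn pert (fun t => t - 3) (uIcc (2 : ℝ) 3) := by
      intro t ht; rw [uIcc_of_le (by norm_num)] at ht; exact pert_on3 ht
    rw [intervalIntegral.integral_congr h,
        intervalIntegral.integral_sub intervalIntegral.intervalIntegrable_id intervalIntegrable_const]
    simp
    norm_num
  have i5 : (∫ t in (3 : ℝ)..b, pert t) = 0 := by
    have h : EqOn pert (fun _ => (0 : ℝ)) (uIcc 3 b) := by
      intro t ht; rw [uIcc_of_le hb] at ht; exact pert_zero_right ht.1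
    rw [intervalIntegral.integral_congr h]; simp
  rw [← intervalIntegral.integral_add_adjacent_intervals (pert_ii a 3) (pert_ii 3 b),
      ← intervalIntegral.integral_add_adjacent_intervals (pert_ii a 2) (pert_ii 2 3),
      ← intervalIntegral.integral_add_adjacent_intervals (pert_ii a 0) (pert_ii 0 2),
      ← intervalIntegral.integral_add_adjacent_intervals (pert_ii a (-1)) (pert_ii (-1) 0),
      i1, i2, i3, i4, i5]
  norm_num

variable {δ : ℝ}

lemma fTwo_lipschitz (hδ : 0 < δ) : LipschitzWith 1 (fTwo δ) := by
  apply LipschitzWith.of_dist_le_mul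
  intro x y
  set a := (x - 1 / 2) / δ
  set b := (y - 1 / 2) / δ
  have hp := pert_lipschitz.dist_le_mul a b
  rw [Real.dist_eq, Real.dist_eq] at hp
  push_cast at hp
  rw [Real.dist_eq, Real.dist_eq]
  push_cast
  have e1 : fTwo δ x - fTwo δ y = δ * (pert a - pert b) := by unfold fTwo; ring
  have e2 : |a - b| = |x - y| / δ := by
    rw [show a - b = (x - y) / δ by unfold a b; ring, abs_div, abs_of_pos hδ]
  rw [e1, abs_mul, abs_of_pos hδ]
  rw [e2] at hp
  rw [one_mul] at hp ⊢
  calc δ * |pert a - pert b| ≤ δ * (|x - y| / δ) :=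
        mul_le_mul_of_nonneg_left hp hδ.le
    _ = |x - y| := by field_simp

lemma fTwo_cont (hδ : 0 < δ) : Continuous (fTwo δ) := (fTwo_lipschitz hδ).continuous

lemma fTwo_lb (hδ : 0 < δ) (v : ℝ) : 1 - δ ≤ fTwo δ v := by
  have h := (pert_bounds ((v - 1 / 2) / δ)).1
  unfold fTwo; nlinarith

lemma fTwo_ub (hδ : 0 < δ) (v : ℝ) : fTwo δ v ≤ 1 + δ := by
  have h := (pert_bounds ((v - 1 / 2) / δ)).2
  unfold fTwo; nlinarith

lemma fTwo_ii (hδ : 0 < δ) (a b : ℝ) : IntervalIntegrable (fTwo δ) MeasureTheory.volume a b :=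
  (fTwo_cont hδ).intervalIntegrable a b

lemma FTwo_hasDerivAt (hδ : 0 < δ) (x : ℝ) : HasDerivAt (FTwo δ) (fTwo δ x) x := by
  unfold FTwo
  exact intervalIntegral.integral_hasDerivAt_right (fTwo_ii hδ 0 x)
    ((fTwo_cont hδ).stronglyMeasurable.stronglyMeasurableAtFilter)
    (fTwo_cont hδ).continuousAt

lemma integral_fTwo (hδ : 0 < δ) (a b : ℝ) :
    (∫ v in a..b, fTwo δ v) =
      (b - a) + δ ^ 2 * ∫ t in (a - 1 / 2) / δ..(b - 1 / 2) / δ, pert t := by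
  have hI : IntervalIntegrable (fun v => δ * pert ((v - 1 / 2) / δ))
      MeasureTheory.volume a b :=
    (continuous_const.mul (pert_cont.comp
      ((continuous_id.sub continuous_const).div_const δ))).intervalIntegrable a b
  unfold fTwo
  rw [intervalIntegral.integral_add intervalIntegrable_const hI,
      intervalIntegral.integral_const, intervalIntegral.integral_const_mul]
  have hsub := intervalIntegral.integral_comp_sub_right (a := a) (b := b)
      (fun u => pert (u / δ)) (1 / 2)
  rw [hsub, intervalIntegral.integral_comp_div (f := pert) hδ.ne']
  simp only [smul_eq_mul]
  ring

lemma FTwo_one (hδ : 0 < δ) (hδ7 : δ ≤ 1 / 7) : FTwo δ 1 = 1 := by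
  unfold FTwo
  rw [integral_fTwo hδ, integral_pert]
  · ring
  · rw [div_le_iff₀ hδ]; nlinarith
  · rw [le_div_iff₀ hδ]; nlinarith

lemma FTwo_nonneg (hδ : 0 < δ) (hδ7 : δ ≤ 1 / 7) {v : ℝ} (hv : 0 ≤ v) : 0 ≤ FTwo δ v := by
  unfold FTwo
  exact intervalIntegral.integral_nonneg hv fun u _ => by nlinarith [fTwo_lb hδ u]

lemma G_eq (hδ : 0 < δ) (hδ7 : δ ≤ 1 / 7) (v : ℝ) :
    1 - FTwo δ v = ∫ t in v..1, fTwo δ t := by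
  have h := intervalIntegral.integral_add_adjacent_intervals (fTwo_ii hδ 0 v) (fTwo_ii hδ v 1)
  have h1 : FTwo δ 1 = 1 := FTwo_one hδ hδ7
  unfold FTwo at h1 ⊢
  linarith

lemma G_lb (hδ : 0 < δ) (hδ7 : δ ≤ 1 / 7) {v : ℝ} (hv : v ≤ 1) :
    (1 - δ) * (1 - v) ≤ 1 - FTwo δ v := by
  rw [G_eq hδ hδ7]
  have h : (∫ _ in v..(1 : ℝ), (1 - δ)) ≤ ∫ t in v..1, fTwo δ t :=
    intervalIntegral.integral_mono_on hv intervalIntegrable_const (fTwo_ii hδ v 1)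
      fun u _ => fTwo_lb hδ u
  rw [intervalIntegral.integral_const, smul_eq_mul] at h
  linarith

lemma G_pos (hδ : 0 < δ) (hδ7 : δ ≤ 1 / 7) {v : ℝ} (hv : v < 1) :
    0 < 1 - FTwo δ v := by
  have := G_lb hδ hδ7 hv.le
  nlinarith

lemma G_le_one (hδ : 0 < δ) (hδ7 : δ ≤ 1 / 7) {v : ℝ} (hv : 0 ≤ v) : 1 - FTwo δ v ≤ 1 := by
  have := FTwo_nonneg hδ hδ7 hv; linarith

/-- derivative pieces of fTwo -/
lemma fTwo_deriv1 (hδ : 0 < δ) {v : ℝ} (hv : v < 1 / 2 - δ) :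
    HasDerivAt (fTwo δ) 0 v := by
  have h : fTwo δ =ᶠ[nhds v] fun _ => (1 : ℝ) := by
    filter_upwards [Iio_mem_nhds hv] with u hu
    have ht : (u - 1 / 2) / δ ≤ -1 := by
      rw [div_le_iff₀ hδ]; simp only [mem_Iio] at hu; nlinarith
    unfold fTwo; rw [pert_zero_left ht]; ring
  exact (hasDerivAt_const v (1 : ℝ)).congr_of_eventuallyEq h

lemma fTwo_deriv2 (hδ : 0 < δ) {v : ℝ} (hv : v ∈ Ioo (1 / 2 - δ) (1 / 2)) :
    HasDerivAt (fTwo δ) 1 v := by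
  have h : fTwo δ =ᶠ[nhds v] fun u => u + (1 / 2 + δ) := by
    filter_upwards [Ioo_mem_nhds hv.1 hv.2] with u hu
    have ht : (u - 1 / 2) / δ ∈ Icc (-1 : ℝ) 0 := by
      constructor
      · rw [le_div_iff₀ hδ]; nlinarith [hu.1]
      · rw [div_le_iff₀ hδ]; nlinarith [hu.2]
    unfold fTwo
    rw [pert_on1 ht]
    field_simp
    ring
  exact ((hasDerivAt_id v).add_const (1 / 2 + δ)).congr_of_eventuallyEq h

lemma fTwo_deriv3 (hδ : 0 < δ) {v : ℝ} (hv : v ∈ Ioo (1 / 2) (1 / 2 + 2 * δ)) :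
    HasDerivAt (fTwo δ) (-1) v := by
  have h : fTwo δ =ᶠ[nhds v] fun u => (3 / 2 + δ) - u := by
    filter_upwards [Ioo_mem_nhds hv.1 hv.2] with u hu
    have ht : (u - 1 / 2) / δ ∈ Icc (0 : ℝ) 2 := by
      constructor
      · rw [le_div_iff₀ hδ]; nlinarith [hu.1]
      · rw [div_le_iff₀ hδ]; nlinarith [hu.2]
    unfold fTwo
    rw [pert_on2 ht]
    field_simp
    ring
  have : HasDerivAt (fun u : ℝ => (3 / 2 + δ) - u) (-1) v := by
    simpa using (hasDerivAt_id v).const_sub (3 / 2 + δ)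
  exact this.congr_of_eventuallyEq h

lemma fTwo_deriv4 (hδ : 0 < δ) {v : ℝ} (hv : v ∈ Ioo (1 / 2 + 2 * δ) (1 / 2 + 3 * δ)) :
    HasDerivAt (fTwo δ) 1 v := by
  have h : fTwo δ =ᶠ[nhds v] fun u => u + (1 / 2 - 3 * δ) := by
    filter_upwards [Ioo_mem_nhds hv.1 hv.2] with u hu
    have ht : (u - 1 / 2) / δ ∈ Icc (2 : ℝ) 3 := by
      constructor
      · rw [le_div_iff₀ hδ]; nlinarith [hu.1]
      · rw [div_le_iff₀ hδ]; nlinarith [hu.2]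
    unfold fTwo
    rw [pert_on3 ht]
    field_simp
    ring
  exact ((hasDerivAt_id v).add_const (1 / 2 - 3 * δ)).congr_of_eventuallyEq h

lemma fTwo_deriv5 (hδ : 0 < δ) {v : ℝ} (hv : 1 / 2 + 3 * δ < v) :
    HasDerivAt (fTwo δ) 0 v := by
  have h : fTwo δ =ᶠ[nhds v] fun _ => (1 : ℝ) := by
    filter_upwards [Ioi_mem_nhds hv] with u hu
    have ht : (3 : ℝ) ≤ (u - 1 / 2) / δ := by
      rw [le_div_iff₀ hδ]; simp only [mem_Ioi] at hu; nlinarith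
    unfold fTwo; rw [pert_zero_right ht]; ring
  exact (hasDerivAt_const v (1 : ℝ)).congr_of_eventuallyEq h

noncomputable def Qf (δ : ℝ) (v : ℝ) : ℝ := fTwo δ v * ((1 - FTwo δ v) ^ 2)⁻¹

lemma G_hasDerivAt (hδ : 0 < δ) (v : ℝ) :
    HasDerivAt (fun u => 1 - FTwo δ u) (-(fTwo δ v)) v :=
  (FTwo_hasDerivAt hδ v).const_sub 1

lemma Qf_hasDerivAt (hδ : 0 < δ) (hδ7 : δ ≤ 1 / 7) {v : ℝ} (hv : v < 1)
    {c : ℝ} (hf : HasDerivAt (fTwo δ) c v) :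
    HasDerivAt (Qf δ)
      (c * ((1 - FTwo δ v) ^ 2)⁻¹ +
        fTwo δ v * (-(2 * (1 - FTwo δ v) ^ 1 * (-(fTwo δ v))) / ((1 - FTwo δ v) ^ 2) ^ 2)) v := by
  have hGne : (1 - FTwo δ v) ≠ 0 := (G_pos hδ hδ7 hv).ne'
  exact hf.mul (((G_hasDerivAt hδ v).pow 2).inv (pow_ne_zero 2 hGne))

lemma Qf_deriv_nonneg (hδ : 0 < δ) (hδ7 : δ ≤ 1 / 7) {v : ℝ} (hv0 : 0 ≤ v) (hv : v < 1)
    {c : ℝ} (hc : -1 ≤ c) (hf : HasDerivAt (fTwo δ) c v) :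
    0 ≤ deriv (Qf δ) v := by
  rw [(Qf_hasDerivAt hδ hδ7 hv hf).deriv]
  set G := 1 - FTwo δ v with hG
  set f := fTwo δ v with hfv
  have hGpos : 0 < G := G_pos hδ hδ7 hv
  have hG1 : G ≤ 1 := G_le_one hδ hδ7 hv0
  have hflb : 1 - δ ≤ f := fTwo_lb hδ v
  have hE : c * (G ^ 2)⁻¹ + f * (-(2 * G ^ 1 * (-f)) / (G ^ 2) ^ 2)
      = (c * G + 2 * f ^ 2) / G ^ 3 := by
    field_simp
  rw [hE]
  apply div_nonneg _ (by positivity)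
  have h1 : -1 * G ≤ c * G := mul_le_mul_of_nonneg_right hc hGpos.le
  nlinarith [mul_le_mul hflb hflb (by nlinarith) (by nlinarith)]

lemma Qf_contOn (hδ : 0 < δ) (hδ7 : δ ≤ 1 / 7) {S : Set ℝ} (hsub : S ⊆ Ico 0 1) :
    ContinuousOn (Qf δ) S := by
  have hFdiff : Differentiable ℝ (FTwo δ) := fun x => (FTwo_hasDerivAt hδ x).differentiableAt
  have hFcont : Continuous (FTwo δ) := hFdiff.continuous
  apply ContinuousOn.mul ((fTwo_cont hδ).continuousOn)
  apply ContinuousOn.inv₀ (((continuous_const.sub hFcont).pow 2).continuousOn)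
  intro v hv
  exact pow_ne_zero 2 (G_pos hδ hδ7 (hsub hv).2).ne'

lemma Qf_mono_piece (hδ : 0 < δ) (hδ7 : δ ≤ 1 / 7) {S : Set ℝ}
    (hconv : Convex ℝ S) (hsub : S ⊆ Ico 0 1) {c : ℝ} (hc : -1 ≤ c)
    (hslope : ∀ v ∈ interior S, HasDerivAt (fTwo δ) c v) :
    MonotoneOn (Qf δ) S := by
  have hintsub : interior S ⊆ S := interior_subset
  apply monotoneOn_of_deriv_nonneg hconv (Qf_contOn hδ hδ7 hsub)
  · intro v hv
    exact (Qf_hasDerivAt hδ hδ7 (hsub (hintsub hv)).2 (hslope v hv)).differentiableAt.differentiableWithinAt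
  · intro v hv
    exact Qf_deriv_nonneg hδ hδ7 (hsub (hintsub hv)).1 (hsub (hintsub hv)).2 hc (hslope v hv)

lemma monotoneOn_glue {f : ℝ → ℝ} {s : Set ℝ} {y : ℝ} (hy : y ∈ s)
    (h1 : MonotoneOn f (s ∩ Iic y)) (h2 : MonotoneOn f (s ∩ Ici y)) :
    MonotoneOn f s := by
  intro u hu v hv huv
  rcases le_total v y with h | h
  · exact h1 ⟨hu, huv.trans h⟩ ⟨hv, h⟩ huv
  · rcases le_total u y with h' | h'
    · exact le_trans (h1 ⟨hu, h'⟩ ⟨hy, le_refl y⟩ h') (h2 ⟨hy, le_refl y⟩ ⟨hv, h⟩ h)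
    · exact h2 ⟨hu, h'⟩ ⟨hv, h⟩ huv

lemma Qf_mono (hδ : 0 < δ) (hδ7 : δ ≤ 1 / 7) : MonotoneOn (Qf δ) (Ioo 0 1) := by
  have p1 : MonotoneOn (Qf δ) (Icc 0 (1 / 2 - δ)) := by
    apply Qf_mono_piece hδ hδ7 (convex_Icc _ _)
      (fun v hv => ⟨hv.1, by linarith [hv.2]⟩) (by norm_num : (-1 : ℝ) ≤ 0)
    rw [interior_Icc]
    exact fun v hv => fTwo_deriv1 hδ hv.2
  have p2 : MonotoneOn (Qf δ) (Icc (1 / 2 - δ) (1 / 2)) := by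
    apply Qf_mono_piece hδ hδ7 (convex_Icc _ _)
      (fun v hv => ⟨by linarith [hv.1], by linarith [hv.2]⟩) (by norm_num : (-1 : ℝ) ≤ 1)
    rw [interior_Icc]
    exact fun v hv => fTwo_deriv2 hδ hv
  have p3 : MonotoneOn (Qf δ) (Icc (1 / 2) (1 / 2 + 2 * δ)) := by
    apply Qf_mono_piece hδ hδ7 (convex_Icc _ _)
      (fun v hv => ⟨by linarith [hv.1], by linarith [hv.2]⟩) (le_refl (-1 : ℝ))
    rw [interior_Icc]
    exact fun v hv => fTwo_deriv3 hδ hv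
  have p4 : MonotoneOn (Qf δ) (Icc (1 / 2 + 2 * δ) (1 / 2 + 3 * δ)) := by
    apply Qf_mono_piece hδ hδ7 (convex_Icc _ _)
      (fun v hv => ⟨by linarith [hv.1], by linarith [hv.2]⟩) (by norm_num : (-1 : ℝ) ≤ 1)
    rw [interior_Icc]
    exact fun v hv => fTwo_deriv4 hδ hv
  have p5 : MonotoneOn (Qf δ) (Ico (1 / 2 + 3 * δ) 1) := by
    apply Qf_mono_piece hδ hδ7 (convex_Ico _ _)
      (fun v hv => ⟨by linarith [hv.1], hv.2⟩) (by norm_num : (-1 : ℝ) ≤ 0)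
    rw [interior_Ico]
    exact fun v hv => fTwo_deriv5 hδ hv.1
  refine monotoneOn_glue (s := Ioo 0 1) (y := 1 / 2 - δ)
    (show (1 / 2 - δ : ℝ) ∈ Ioo (0 : ℝ) 1 by refine ⟨?_, ?_⟩ <;> first | linarith | (simp only [mem_Ici]; linarith))
    (p1.mono fun v hv => ⟨hv.1.1.le, hv.2⟩) ?_
  refine monotoneOn_glue (s := Ioo 0 1 ∩ Ici (1 / 2 - δ)) (y := 1 / 2)
    (show (1 / 2 : ℝ) ∈ Ioo (0 : ℝ) 1 ∩ Ici (1 / 2 - δ) by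
      refine ⟨⟨?_, ?_⟩, ?_⟩ <;> first | linarith | (simp only [mem_Ici]; linarith))
    (p2.mono fun v hv => ⟨hv.1.2, hv.2⟩) ?_
  refine monotoneOn_glue (s := Ioo 0 1 ∩ Ici (1 / 2 - δ) ∩ Ici (1 / 2)) (y := 1 / 2 + 2 * δ)
    (show (1 / 2 + 2 * δ : ℝ) ∈ Ioo (0 : ℝ) 1 ∩ Ici (1 / 2 - δ) ∩ Ici (1 / 2) by
      refine ⟨⟨⟨?_, ?_⟩, ?_⟩, ?_⟩ <;> first | linarith | (simp only [mem_Ici]; linarith))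
    (p3.mono fun v hv => ⟨hv.1.2, hv.2⟩) ?_
  refine monotoneOn_glue (s := Ioo 0 1 ∩ Ici (1 / 2 - δ) ∩ Ici (1 / 2) ∩ Ici (1 / 2 + 2 * δ)) (y := 1 / 2 + 3 * δ)
    (show (1 / 2 + 3 * δ : ℝ) ∈ Ioo (0 : ℝ) 1 ∩ Ici (1 / 2 - δ) ∩ Ici (1 / 2) ∩ Ici (1 / 2 + 2 * δ) by
      refine ⟨⟨⟨⟨?_, ?_⟩, ?_⟩, ?_⟩, ?_⟩ <;> first | linarith | (simp only [mem_Ici]; linarith))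
    (p4.mono fun v hv => ⟨hv.1.2, hv.2⟩)
    (p5.mono fun v hv => ⟨hv.2, hv.1.1.1.1.2⟩)

lemma inv_hasDerivAt (hδ : 0 < δ) (hδ7 : δ ≤ 1 / 7) {v : ℝ} (hv : v < 1) :
    HasDerivAt (fun u => (1 - FTwo δ u)⁻¹) (Qf δ v) v := by
  have hGne : (1 - FTwo δ v) ≠ 0 := (G_pos hδ hδ7 hv).ne'
  have h := (G_hasDerivAt hδ v).inv hGne
  have he : -(-(fTwo δ v)) / (1 - FTwo δ v) ^ 2 = Qf δ v := by
    unfold Qf; field_simp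
  rw [he] at h
  exact h

lemma convex_main (hδ : 0 < δ) (hδ7 : δ ≤ 1 / 7) :
    ConvexOn ℝ (Ico (0 : ℝ) 1) (fun v => (1 - FTwo δ v)⁻¹) := by
  have hFdiff : Differentiable ℝ (FTwo δ) := fun x => (FTwo_hasDerivAt hδ x).differentiableAt
  have hmono : MonotoneOn (deriv fun v => (1 - FTwo δ v)⁻¹) (interior (Ico (0 : ℝ) 1)) := by
    rw [interior_Ico]
    exact (Qf_mono hδ hδ7).congr fun v hv => ((inv_hasDerivAt hδ hδ7 hv.2).deriv).symm
  apply hmono.convexOn_of_deriv (convex_Ico 0 1)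
  · apply ContinuousOn.inv₀ ((continuous_const.sub hFdiff.continuous).continuousOn)
    intro v hv
    exact (G_pos hδ hδ7 hv.2).ne'
  · rw [interior_Ico]
    intro v hv
    exact (inv_hasDerivAt hδ hδ7 hv.2).differentiableAt.differentiableWithinAt

/-- for all sufficiently small `δ ∈ (0, 1/3]`, the perturbed function `f₂` is a
probability density on `[0,1]`, and for `δ < 1/3` it is Myerson regular: `(1 - F₂)⁻¹` is convex
on `[0,1)`; equivalently, `ψ = 2 f₂² + (1 - F₂) f₂′` is nonnegative at every point of `[0,1)`
where `f₂` is differentiable. -/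
theorem stmt16_perturbed_density_regular :
    ∃ δ₀ > (0 : ℝ), δ₀ ≤ 1 / 3 ∧ ∀ δ : ℝ, 0 < δ → δ ≤ δ₀ →
      ((∀ v ∈ Icc (0 : ℝ) 1, 0 ≤ fTwo δ v) ∧
        (∫ v in (0 : ℝ)..1, fTwo δ v) = 1) ∧
      (δ < 1 / 3 →
        ConvexOn ℝ (Ico (0 : ℝ) 1) (fun v => (1 - FTwo δ v)⁻¹) ∧
        ∀ v ∈ Ico (0 : ℝ) 1, DifferentiableAt ℝ (fTwo δ) v →
          0 ≤ 2 * fTwo δ v ^ 2 + (1 - FTwo δ v) * deriv (fTwo δ) v) := by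
  refine ⟨1 / 7, by norm_num, by norm_num, ?_⟩
  intro δ hδ hδ7
  constructor
  · constructor
    · intro v _
      have := fTwo_lb hδ v
      linarith
    · have := FTwo_one hδ hδ7
      unfold FTwo at this
      exact this
  · intro _
    refine ⟨convex_main hδ hδ7, ?_⟩
    intro v hv _
    have hd : ‖deriv (fTwo δ) v‖ ≤ ((1 : NNReal) : ℝ) :=
      norm_deriv_le_of_lipschitz (𝕜 := ℝ) (fTwo_lipschitz hδ)
    rw [Real.norm_eq_abs] at hd
    push_cast at hd
    have hd1 : -1 ≤ deriv (fTwo δ) v := (abs_le.mp hd).1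
    have hG0 : 0 < 1 - FTwo δ v := G_pos hδ hδ7 hv.2
    have hG1 : 1 - FTwo δ v ≤ 1 := G_le_one hδ hδ7 hv.1
    have hf : 1 - δ ≤ fTwo δ v := fTwo_lb hδ v
    nlinarith [mul_le_mul_of_nonneg_right hd1 hG0.le,
      mul_le_mul hf hf (by linarith) (by linarith)]
end

section
/- Let f₁ be the uniform density on [0,1] and f₂(v) = 1 + δ φ((v − 1/2)/δ) with the perturbation function φ and δ ∈ (0, 1/8]. Then the squared Hellinger distance satisfies H(f₁ ∥ f₂)² = ∫₀¹ ( √(f₁(v)) − √(f₂(v)) )² dv ≤ (2√2 / 3) δ³. In particular, choosing δ = (3 / (8√2 n))^{1/3} yields H(f₁ ∥ f₂)² ≤ 1/(4n), while |f₁(1/2) − f₂(1/2)| = δ. -/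
open Set

lemma measurable_pert : Measurable pert := by
  unfold pert
  exact (measurable_id.add_const 1).ite measurableSet_Icc
    (((measurable_id.neg.add_const 1)).ite measurableSet_Icc
      ((measurable_id.sub_const 3).ite measurableSet_Icc measurable_const))

lemma pert_abs_le (t : ℝ) : |pert t| ≤ 1 := by
  unfold pert
  split_ifs with h1 h2 h3 <;> rw [abs_le] <;>
    first
    | exact ⟨by linarith [h1.1, h1.2], by linarith [h1.1, h1.2]⟩
    | exact ⟨by linarith [h2.1, h2.2], by linarith [h2.1, h2.2]⟩
    | exact ⟨by linarith [h3.1, h3.2], by linarith [h3.1, h3.2]⟩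
    | exact ⟨by norm_num, by norm_num⟩

lemma my_intervalIntegrable {f : ℝ → ℝ} (hm : Measurable f) {C : ℝ}
    (hb : ∀ x, |f x| ≤ C) (a b : ℝ) : IntervalIntegrable f MeasureTheory.volume a b := by
  rw [intervalIntegrable_iff]
  exact MeasureTheory.Measure.integrableOn_of_bounded (by rw [Set.uIoc]; exact measure_Ioc_lt_top.ne) hm.aestronglyMeasurable
    (Filter.Eventually.of_forall fun x => by simpa using hb x)

lemma sqrt_ineq {x : ℝ} (h1 : -(1/8) ≤ x) (h2 : x ≤ 1/8) :
    (1 - Real.sqrt (1 + x)) ^ 2 ≤ x ^ 2 / 2 := by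
  have hx : (0:ℝ) ≤ 1 + x := by linarith
  have hs0 : 0 ≤ Real.sqrt (1 + x) := Real.sqrt_nonneg _
  have hs : Real.sqrt (1 + x) ^ 2 = 1 + x := Real.sq_sqrt hx
  have hge : (7:ℝ)/8 ≤ Real.sqrt (1 + x) ^ 2 := by rw [hs]; linarith
  have hge' : (7:ℝ)/8 ≤ Real.sqrt (1 + x) := by nlinarith
  have key : (1 - Real.sqrt (1 + x)) ^ 2 * (1 + Real.sqrt (1 + x)) ^ 2 = x ^ 2 := by
    nlinarith [hs]
  nlinarith [sq_nonneg (1 - Real.sqrt (1 + x)), key, hge']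

lemma pert_sq_abs_le (t : ℝ) : |pert t ^ 2| ≤ 1 := by
  have h := pert_abs_le t
  rw [abs_pow]
  nlinarith [abs_nonneg (pert t)]

lemma pert_sq_ii (a b : ℝ) :
    IntervalIntegrable (fun t => pert t ^ 2) MeasureTheory.volume a b :=
  my_intervalIntegrable (measurable_pert.pow_const 2) pert_sq_abs_le a b

lemma pert_sq_int_left {A : ℝ} (hA : A ≤ -1) :
    ∫ t in A..(-1 : ℝ), pert t ^ 2 = 0 := by
  rw [intervalIntegral.integral_congr (g := fun _ => 0), intervalIntegral.integral_zero]
  intro t ht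
  rw [Set.uIcc_of_le hA] at ht
  obtain ⟨ht1, ht2⟩ := ht
  show pert t ^ 2 = 0
  unfold pert
  split_ifs with h1 h2 h3
  · have : t = -1 := le_antisymm ht2 h1.1
    rw [this]; norm_num
  · exact absurd h2.1 (by linarith)
  · exact absurd h3.1 (by linarith)
  · norm_num

lemma pert_sq_int_right {B : ℝ} (hB : 3 ≤ B) :
    ∫ t in (3 : ℝ)..B, pert t ^ 2 = 0 := by
  rw [intervalIntegral.integral_congr (g := fun _ => 0), intervalIntegral.integral_zero]
  intro t ht
  rw [Set.uIcc_of_le hB] at ht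
  obtain ⟨ht1, ht2⟩ := ht
  show pert t ^ 2 = 0
  unfold pert
  split_ifs with h1 h2 h3
  · exact absurd h1.2 (by linarith)
  · exact absurd h2.2 (by linarith)
  · have : t = 3 := le_antisymm h3.2 ht1
    rw [this]; norm_num
  · norm_num

lemma pert_sq_int_mid : ∫ t in (-1 : ℝ)..3, pert t ^ 2 = 4 / 3 := by
  have i1 : ∫ t in (-1 : ℝ)..0, pert t ^ 2 = 1 / 3 := by
    rw [intervalIntegral.integral_congr (g := fun t => (t + 1) ^ 2)]
    · have := intervalIntegral.integral_comp_add_right (a := (-1:ℝ)) (b := 0)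
        (fun u => u ^ 2) 1
      rw [this]
      norm_num [integral_pow]
    · intro t ht
      rw [Set.uIcc_of_le (by norm_num : (-1:ℝ) ≤ 0)] at ht
      show pert t ^ 2 = (t + 1) ^ 2
      unfold pert
      rw [if_pos ht]
  have i2 : ∫ t in (0 : ℝ)..2, pert t ^ 2 = 2 / 3 := by
    rw [intervalIntegral.integral_congr (g := fun t => (t - 1) ^ 2)]
    · have := intervalIntegral.integral_comp_sub_right (a := (0:ℝ)) (b := 2)
        (fun u => u ^ 2) 1
      rw [this]
      norm_num [integral_pow]
    · intro t ht
      rw [Set.uIcc_of_le (by norm_num : (0:ℝ) ≤ 2)] at ht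
      obtain ⟨ht1, ht2⟩ := ht
      show pert t ^ 2 = (t - 1) ^ 2
      unfold pert
      split_ifs with h1 h2 h3
      · have : t = 0 := le_antisymm h1.2 ht1
        rw [this]; norm_num
      · ring
      · exact absurd ⟨ht1, ht2⟩ h2
      · exact absurd ⟨ht1, ht2⟩ h2
  have i3 : ∫ t in (2 : ℝ)..3, pert t ^ 2 = 1 / 3 := by
    rw [intervalIntegral.integral_congr (g := fun t => (t - 3) ^ 2)]
    · have := intervalIntegral.integral_comp_sub_right (a := (2:ℝ)) (b := 3)
        (fun u => u ^ 2) 3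
      rw [this]
      norm_num [integral_pow]
    · intro t ht
      rw [Set.uIcc_of_le (by norm_num : (2:ℝ) ≤ 3)] at ht
      obtain ⟨ht1, ht2⟩ := ht
      show pert t ^ 2 = (t - 3) ^ 2
      unfold pert
      split_ifs with h1 h2 h3
      · exact absurd h1.2 (by linarith)
      · have : t = 2 := le_antisymm h2.2 ht1
        rw [this]; norm_num
      · ring
      · exact absurd ⟨ht1, ht2⟩ h3
  have s1 := intervalIntegral.integral_add_adjacent_intervals
    (pert_sq_ii (-1) 0) (pert_sq_ii 0 2)
  have s2 := intervalIntegral.integral_add_adjacent_intervals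
    (pert_sq_ii (-1) 2) (pert_sq_ii 2 3)
  rw [← s2, ← s1, i1, i2, i3]
  norm_num

lemma pert_sq_integral (δ : ℝ) (hδ : 0 < δ) (hδ' : δ ≤ 1 / 8) :
    ∫ v in (0 : ℝ)..1, pert ((v - 1 / 2) / δ) ^ 2 = 4 / 3 * δ := by
  have step1 : (∫ v in (0 : ℝ)..1, pert ((v - 1 / 2) / δ) ^ 2)
      = ∫ x in (0 - 1/2 : ℝ)..(1 - 1/2), pert (x / δ) ^ 2 :=
    intervalIntegral.integral_comp_sub_right (fun x => pert (x / δ) ^ 2) (1/2)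
  have step2 : (∫ x in (0 - 1/2 : ℝ)..(1 - 1/2), (fun t => pert t ^ 2) (x / δ))
      = δ • ∫ t in ((0 - 1/2 : ℝ)/δ)..((1 - 1/2)/δ), pert t ^ 2 :=
    intervalIntegral.integral_comp_div (fun t => pert t ^ 2) hδ.ne'
  have hA : (0 - 1/2 : ℝ) / δ ≤ -1 := by
    rw [div_le_iff₀ hδ]; nlinarith
  have hB : (3 : ℝ) ≤ (1 - 1/2) / δ := by
    rw [le_div_iff₀ hδ]; nlinarith
  have s1 := intervalIntegral.integral_add_adjacent_intervals
    (pert_sq_ii ((0 - 1/2 : ℝ)/δ) (-1)) (pert_sq_ii (-1) 3)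
  have s2 := intervalIntegral.integral_add_adjacent_intervals
    (pert_sq_ii ((0 - 1/2 : ℝ)/δ) 3) (pert_sq_ii 3 ((1 - 1/2)/δ))
  rw [step1, step2, ← s2, ← s1, pert_sq_int_left hA, pert_sq_int_right hB,
    pert_sq_int_mid, smul_eq_mul]
  ring

/-- The uniform density `f₁ ≡ 1` on `[0,1]`. -/
noncomputable def fOne (_v : ℝ) : ℝ := 1

/-- The squared Hellinger distance between densities `g` and `h` on `[0,1]`. -/
noncomputable def hellingerSq (g h : ℝ → ℝ) : ℝ :=
  ∫ v in (0 : ℝ)..1, (Real.sqrt (g v) - Real.sqrt (h v)) ^ 2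

lemma main_bound (δ : ℝ) (hδ : 0 < δ) (hδ' : δ ≤ 1 / 8) :
    hellingerSq fOne (fTwo δ) ≤ 2 / 3 * δ ^ 3 := by
  have hxabs : ∀ v : ℝ, |δ * pert ((v - 1 / 2) / δ)| ≤ 1 / 8 := by
    intro v
    rw [abs_mul, abs_of_pos hδ]
    calc δ * |pert ((v - 1 / 2) / δ)| ≤ δ * 1 :=
          mul_le_mul_of_nonneg_left (pert_abs_le _) hδ.le
      _ ≤ 1 / 8 := by linarith
  have hpt : ∀ v : ℝ, (Real.sqrt (fOne v) - Real.sqrt (fTwo δ v)) ^ 2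
      ≤ 1 / 2 * (δ * pert ((v - 1 / 2) / δ)) ^ 2 := by
    intro v
    have h := hxabs v
    rw [abs_le] at h
    have := sqrt_ineq h.1 h.2
    simpa [fOne, fTwo, Real.sqrt_one] using by linarith [sqrt_ineq h.1 h.2]
  have hm2 : Measurable fun v : ℝ => pert ((v - 1 / 2) / δ) :=
    measurable_pert.comp ((measurable_id.sub_const _).div_const _)
  have hii1 : IntervalIntegrable
      (fun v => (Real.sqrt (fOne v) - Real.sqrt (fTwo δ v)) ^ 2)
      MeasureTheory.volume 0 1 := by
    apply my_intervalIntegrable (C := 4)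
    · exact ((Real.continuous_sqrt.measurable.comp (measurable_const : Measurable fOne)).sub
        (Real.continuous_sqrt.measurable.comp
          ((measurable_const.add (hm2.const_mul δ)) : Measurable (fTwo δ)))).pow_const 2
    · intro v
      have h := hxabs v
      rw [abs_le] at h
      have hx : (0:ℝ) ≤ 1 + δ * pert ((v - 1 / 2) / δ) := by linarith [h.1]
      have hs0 : 0 ≤ Real.sqrt (1 + δ * pert ((v - 1 / 2) / δ)) := Real.sqrt_nonneg _
      have hs : Real.sqrt (1 + δ * pert ((v - 1 / 2) / δ)) ^ 2
          = 1 + δ * pert ((v - 1 / 2) / δ) := Real.sq_sqrt hx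
      simp only [fOne, fTwo, Real.sqrt_one]
      rw [abs_le]
      constructor <;> nlinarith [h.1, h.2]
  have hii2 : IntervalIntegrable
      (fun v => 1 / 2 * (δ * pert ((v - 1 / 2) / δ)) ^ 2)
      MeasureTheory.volume 0 1 := by
    apply my_intervalIntegrable (C := 1)
    · exact ((hm2.const_mul δ).pow_const 2).const_mul _
    · intro v
      have h := hxabs v
      rw [abs_le] at h
      rw [abs_le]
      constructor <;> nlinarith [h.1, h.2]
  have hmono := intervalIntegral.integral_mono_on (by norm_num : (0:ℝ) ≤ 1) hii1 hii2
    (fun v _ => hpt v)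
  have heq : (∫ v in (0:ℝ)..1, 1 / 2 * (δ * pert ((v - 1 / 2) / δ)) ^ 2)
      = 2 / 3 * δ ^ 3 := by
    have hfun : (fun v => 1 / 2 * (δ * pert ((v - 1 / 2) / δ)) ^ 2)
        = fun v => δ ^ 2 / 2 * pert ((v - 1 / 2) / δ) ^ 2 := by
      funext v; ring
    rw [hfun, intervalIntegral.integral_const_mul, pert_sq_integral δ hδ hδ']
    ring
  calc hellingerSq fOne (fTwo δ)
      ≤ ∫ v in (0:ℝ)..1, 1 / 2 * (δ * pert ((v - 1 / 2) / δ)) ^ 2 := hmono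
    _ = 2 / 3 * δ ^ 3 := heq


/-- for `δ ∈ (0, 1/8]`, the squared Hellinger distance between the uniform
density `f₁` and the perturbed density `f₂` satisfies `H(f₁‖f₂)² ≤ (2√2/3) δ³`; in particular,
choosing `δ = (3/(8√2 n))^{1/3}` yields `H(f₁‖f₂)² ≤ 1/(4n)`; moreover
`|f₁(1/2) - f₂(1/2)| = δ`. -/
theorem stmt17_hellinger_bound
    (δ : ℝ) (hδ : 0 < δ) (hδ' : δ ≤ 1 / 8) :
    hellingerSq fOne (fTwo δ) ≤ 2 * Real.sqrt 2 / 3 * δ ^ 3 ∧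
    |fOne (1 / 2) - fTwo δ (1 / 2)| = δ ∧
    (∀ n : ℕ, 0 < n → δ = (3 / (8 * Real.sqrt 2 * n)) ^ ((1 : ℝ) / 3) →
      hellingerSq fOne (fTwo δ) ≤ 1 / (4 * n)) := by
  have hs1 : (1:ℝ) ≤ Real.sqrt 2 := by
    rw [show (1:ℝ) = Real.sqrt 1 by simp]
    exact Real.sqrt_le_sqrt (by norm_num)
  have hmain := main_bound δ hδ hδ'
  have hfirst : hellingerSq fOne (fTwo δ) ≤ 2 * Real.sqrt 2 / 3 * δ ^ 3 := by
    have h3 : 0 < δ ^ 3 := pow_pos hδ 3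
    nlinarith
  refine ⟨hfirst, ?_, ?_⟩
  · have h0 : ((1:ℝ)/2 - 1/2) / δ = 0 := by rw [sub_self, zero_div]
    have hp0 : pert 0 = 1 := by
      unfold pert
      rw [if_pos (by constructor <;> norm_num)]
      norm_num
    rw [fTwo, h0, hp0, fOne]
    rw [show (1:ℝ) - (1 + δ * 1) = -δ by ring, abs_neg, abs_of_pos hδ]
  · intro n hn hδeq
    have hn0 : (0:ℝ) < n := Nat.cast_pos.mpr hn
    have hs0 : (0:ℝ) < Real.sqrt 2 := by linarith
    have hbpos : (0:ℝ) < 3 / (8 * Real.sqrt 2 * n) := by positivity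
    have hcube : δ ^ 3 = 3 / (8 * Real.sqrt 2 * n) := by
      rw [hδeq, ← Real.rpow_natCast ((3 / (8 * Real.sqrt 2 * n)) ^ ((1:ℝ)/3)) 3,
        ← Real.rpow_mul hbpos.le]
      norm_num
    have hval : 2 * Real.sqrt 2 / 3 * δ ^ 3 = 1 / (4 * n) := by
      rw [hcube]
      field_simp
      ring
    linarith [hfirst, hval.le, hval.ge]
end
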